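/- Let A be a locally C*-algebra with topology given by a directed family of continuous C*-seminorms S(A), and let Φ : A → L_B(E) be a continuous *-homomorphism into the adjointable operators on a Hilbert module E over a C*-algebra B. Then there exists p ∈ S(A) with ‖Φ(a)‖ ≤ p(a) for all a ∈ A, and hence Φ factors as Φ = Φ_p ∘ π_p through a *-homomorphism Φ_p : A_p → L_B(E), where A_p = A/ker p is the C*-completion at p and π_p : A → A_p the quotient map. -/

import Mathlib

universe u

/-- A C*-seminorm on a topological *-algebra. -/
def IsCStarSeminorm {A : Type*} [NonUnitalRing A] [StarRing A] [Module ℂ A]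
    (p : A → ℝ) : Prop :=
  (∀ a, 0 ≤ p a) ∧ (∀ a b, p (a + b) ≤ p a + p b) ∧ (∀ (c : ℂ) (a), p (c • a) = ‖c‖ * p a) ∧
    (∀ a b, p (a * b) ≤ p a * p b) ∧ (∀ a, p (star a) = p a) ∧
    (∀ a, p (star a * a) = p a ^ 2)

/-- The Hilbert C*-module class as it stood in Mathlib of December 2024 (right module,
via `SMul Aᵐᵒᵖ E`); Mathlib's `CStarModule` now uses left modules. -/
class CStarModuleOld (A : outParam <| Type*) (E : Type*) [NonUnitalSemiring A] [StarRing A]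
    [Module ℂ A] [AddCommGroup E] [Module ℂ E] [PartialOrder A] [SMul Aᵐᵒᵖ E] [Norm A] [Norm E]
    extends Inner A E where
  inner_add_right {x} {y} {z} : inner x (y + z) = inner x y + inner x z
  inner_self_nonneg {x} : 0 ≤ inner x x
  inner_self {x} : inner x x = 0 ↔ x = 0
  inner_op_smul_right {a : A} {x y : E} : inner x (MulOpposite.op a • y) = inner x y * a
  inner_smul_right_complex {z : ℂ} {x} {y} : inner x (z • y) = z • inner x y
  star_inner x y : star (inner x y) = inner y x
  norm_eq_sqrt_norm_inner_self x : ‖x‖ = √‖inner x x‖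

section OldLemmas

variable {B E : Type*} [NonUnitalCStarAlgebra B] [PartialOrder B] [StarOrderedRing B]
  [NormedAddCommGroup E] [NormedSpace ℂ E] [SMul Bᵐᵒᵖ E] [CStarModuleOld B E]

lemma old_norm_sq_eq (x : E) : ‖x‖ ^ 2 = ‖inner (𝕜 := B) x x‖ := by
  rw [CStarModuleOld.norm_eq_sqrt_norm_inner_self x, Real.sq_sqrt (norm_nonneg _)]

lemma old_inner_zero_left (y : E) : inner (𝕜 := B) (0 : E) y = 0 := by
  rw [← CStarModuleOld.star_inner y (0 : E), ← zero_smul ℂ (0 : E),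
    CStarModuleOld.inner_smul_right_complex, zero_smul, star_zero]

lemma old_inner_neg_right (x y : E) : inner (𝕜 := B) x (-y) = -inner (𝕜 := B) x y := by
  rw [← neg_one_smul ℂ y, CStarModuleOld.inner_smul_right_complex, neg_one_smul]

lemma old_inner_sub_right (x y z : E) :
    inner (𝕜 := B) x (y - z) = inner (𝕜 := B) x y - inner (𝕜 := B) x z := by
  rw [sub_eq_add_neg, CStarModuleOld.inner_add_right, old_inner_neg_right, ← sub_eq_add_neg]

lemma old_inner_sub_left (x y z : E) :
    inner (𝕜 := B) (x - y) z = inner (𝕜 := B) x z - inner (𝕜 := B) y z := by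
  rw [← CStarModuleOld.star_inner z (x - y), old_inner_sub_right, star_sub,
    CStarModuleOld.star_inner, CStarModuleOld.star_inner]

lemma old_inner_op_smul_left (a : B) (x y : E) :
    inner (𝕜 := B) (MulOpposite.op a • x) y = star a * inner (𝕜 := B) x y := by
  rw [← CStarModuleOld.star_inner y, CStarModuleOld.inner_op_smul_right, star_mul,
    CStarModuleOld.star_inner]

lemma old_inner_smul_right_real (r : ℝ) (x y : E) :
    inner (𝕜 := B) x (r • y) = r • inner (𝕜 := B) x y := by
  rw [← Complex.coe_smul, CStarModuleOld.inner_smul_right_complex, Complex.coe_smul]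

lemma old_inner_smul_left_real (r : ℝ) (x y : E) :
    inner (𝕜 := B) (r • x) y = r • inner (𝕜 := B) x y := by
  rw [← CStarModuleOld.star_inner y, old_inner_smul_right_real, star_smul, star_trivial,
    CStarModuleOld.star_inner]

lemma old_norm_inner_le (x y : E) : ‖inner (𝕜 := B) x y‖ ≤ ‖x‖ * ‖y‖ := by
  rcases eq_or_ne x 0 with h | h
  · subst h
    rw [old_inner_zero_left, norm_zero]
    positivity
  set r : ℝ := ‖x‖ ^ 2 with hr
  have hr' : ‖inner (𝕜 := B) x x‖ = r := by rw [hr, old_norm_sq_eq]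
  have hrpos : 0 < r := pow_pos (norm_pos_iff.mpr h) 2
  set a : B := inner (𝕜 := B) x y with ha
  have hsa : star a = inner (𝕜 := B) y x := CStarModuleOld.star_inner x y
  have h0 : (0 : B) ≤ inner (𝕜 := B) (MulOpposite.op a • x - r • y)
      (MulOpposite.op a • x - r • y) := CStarModuleOld.inner_self_nonneg
  have hexp : inner (𝕜 := B) (MulOpposite.op a • x - r • y) (MulOpposite.op a • x - r • y)
      = star a * (inner (𝕜 := B) x x * a) - r • (star a * a) - r • (star a * a)
        + r • r • inner (𝕜 := B) y y := by
    simp only [old_inner_sub_left, old_inner_sub_right, old_inner_op_smul_left,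
      CStarModuleOld.inner_op_smul_right, old_inner_smul_left_real, old_inner_smul_right_real,
      ← ha, ← hsa, mul_sub, sub_mul, smul_sub, mul_smul_comm, smul_mul_assoc, mul_assoc]
    abel
  have hle : star a * (inner (𝕜 := B) x x * a) ≤ r • (star a * a) := by
    rw [← hr', ← mul_assoc]
    exact CStarAlgebra.star_left_conjugate_le_norm_smul (CStarModuleOld.star_inner x x)
  have key : star a * a ≤ r • inner (𝕜 := B) y y := by
    have h1 : r • (star a * a) ≤ r • (r • inner (𝕜 := B) y y) := by
      have h2 : (0 : B) ≤ r • (r • inner (𝕜 := B) y y) - r • (star a * a) := by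
        calc (0 : B) ≤ _ := h0
          _ = _ := hexp
          _ ≤ r • (star a * a) - r • (star a * a) - r • (star a * a)
              + r • r • inner (𝕜 := B) y y := by gcongr
          _ = _ := by abel
      exact sub_nonneg.mp h2
    rwa [smul_le_smul_iff_of_pos_left hrpos] at h1
  have h3 : ‖a‖ ^ 2 ≤ (‖x‖ * ‖y‖) ^ 2 := by
    calc ‖a‖ ^ 2 = ‖star a * a‖ := by rw [CStarRing.norm_star_mul_self, pow_two]
      _ ≤ ‖r • inner (𝕜 := B) y y‖ :=
          CStarAlgebra.norm_le_norm_of_nonneg_of_le (star_mul_self_nonneg a) key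
      _ = (‖x‖ * ‖y‖) ^ 2 := by
          rw [norm_smul, Real.norm_of_nonneg hrpos.le, ← old_norm_sq_eq, hr, mul_pow]
  exact (pow_le_pow_iff_left₀ (norm_nonneg _)
    (mul_nonneg (norm_nonneg _) (norm_nonneg _)) two_ne_zero).mp h3

end OldLemmas

/-- A continuous *-homomorphism Φ from a locally C*-algebra A (topology given by
a directed family (S i) of continuous C*-seminorms) into the adjointable operators L_B(E) on
a Hilbert module E over a C*-algebra B is dominated by some seminorm S i, and factors through
the C*-algebra A_i = A/ker (S i) (presented as any C*-algebra Ap with a surjective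
*-homomorphism π : A → Ap satisfying ‖π a‖ = S i a) via a *-homomorphism Φp with Φ = Φp ∘ π. -/
theorem stmt7 {A : Type u} [NonUnitalRing A] [StarRing A] [Module ℂ A]
    [TopologicalSpace A]
    {B : Type*} [NonUnitalCStarAlgebra B] [PartialOrder B] [StarOrderedRing B]
    {E : Type*} [NormedAddCommGroup E] [NormedSpace ℂ E] [SMul Bᵐᵒᵖ E] [CStarModuleOld B E]
    {ι : Type*} (S : ι → A → ℝ)
    (hS : ∀ i, IsCStarSeminorm (S i))
    (hS_cont : ∀ i, Continuous (S i))
    (hS_dir : ∀ i j, ∃ l, ∀ a, S i a ≤ S l a ∧ S j a ≤ S l a)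
    -- the topology of A is determined by the family S
    (hS_top : (nhds (0 : A)).HasBasis (fun p : ι × ℝ => 0 < p.2)
      (fun p => {a : A | S p.1 a < p.2}))
    -- Φ : A → L_B(E) is a continuous *-homomorphism
    (Φ : A → E →L[ℂ] E)
    (hΦ_add : ∀ a b : A, Φ (a + b) = Φ a + Φ b)
    (hΦ_smul : ∀ (c : ℂ) (a : A), Φ (c • a) = c • Φ a)
    (hΦ_mul : ∀ a b : A, Φ (a * b) = (Φ a).comp (Φ b))
    (hΦ_star : ∀ (a : A) (x y : E),
      inner (𝕜 := B) (Φ a x) y = inner (𝕜 := B) x (Φ (star a) y))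
    (hΦ_cont : Continuous Φ) :
    ∃ i : ι, (∀ a : A, ‖Φ a‖ ≤ S i a) ∧
      ∀ (Ap : Type u), ∀ (_ : NonUnitalCStarAlgebra Ap), ∀ (π : A → Ap),
        (∀ a b : A, π (a + b) = π a + π b) →
        (∀ (c : ℂ) (a : A), π (c • a) = c • π a) →
        (∀ a b : A, π (a * b) = π a * π b) →
        (∀ a : A, π (star a) = star (π a)) →
        Function.Surjective π →
        (∀ a : A, ‖π a‖ = S i a) →
        ∃ Φp : Ap → E →L[ℂ] E,
          (∀ x y : Ap, Φp (x + y) = Φp x + Φp y) ∧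
          (∀ (c : ℂ) (x : Ap), Φp (c • x) = c • Φp x) ∧
          (∀ x y : Ap, Φp (x * y) = (Φp x).comp (Φp y)) ∧
          (∀ (x : Ap) (ξ η : E),
            inner (𝕜 := B) (Φp x ξ) η = inner (𝕜 := B) ξ (Φp (star x) η)) ∧
          (∀ a : A, Φ a = Φp (π a)) := by
  -- Basic consequences of additivity
  have hΦ0 : Φ 0 = 0 := by
    have h := hΦ_add 0 0
    rw [add_zero] at h
    exact (left_eq_add.mp h)
  have hΦneg : ∀ a : A, Φ (-a) = -Φ a := by
    intro a
    have h := hΦ_add a (-a)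
    rw [add_neg_cancel, hΦ0] at h
    exact eq_neg_of_add_eq_zero_right h.symm
  have hΦsub : ∀ a b : A, Φ (a - b) = Φ a - Φ b := by
    intro a b
    rw [sub_eq_add_neg, hΦ_add, hΦneg, sub_eq_add_neg]
  -- C*-inequality: ‖Φ a‖ ^ 2 ≤ ‖Φ (star a * a)‖
  have key : ∀ a : A, ‖Φ a‖ ^ 2 ≤ ‖Φ (star a * a)‖ := by
    intro a
    have hb : ∀ x : E, ‖Φ a x‖ ^ 2 ≤ ‖Φ (star a * a)‖ * ‖x‖ ^ 2 := by
      intro x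
      calc ‖Φ a x‖ ^ 2 = ‖inner (𝕜 := B) (Φ a x) (Φ a x)‖ := old_norm_sq_eq _
        _ = ‖inner (𝕜 := B) x (Φ (star a) (Φ a x))‖ := by rw [hΦ_star]
        _ = ‖inner (𝕜 := B) x (Φ (star a * a) x)‖ := by
            rw [hΦ_mul, ContinuousLinearMap.comp_apply]
        _ ≤ ‖x‖ * ‖Φ (star a * a) x‖ := old_norm_inner_le _ _
        _ ≤ ‖x‖ * (‖Φ (star a * a)‖ * ‖x‖) := by
            gcongr
            exact (Φ (star a * a)).le_opNorm x
        _ = ‖Φ (star a * a)‖ * ‖x‖ ^ 2 := by ring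
    have h1 : ‖Φ a‖ ≤ Real.sqrt ‖Φ (star a * a)‖ := by
      apply ContinuousLinearMap.opNorm_le_bound _ (Real.sqrt_nonneg _)
      intro x
      have h2 := hb x
      have h3 : (Real.sqrt ‖Φ (star a * a)‖ * ‖x‖) ^ 2
          = ‖Φ (star a * a)‖ * ‖x‖ ^ 2 := by
        rw [mul_pow, Real.sq_sqrt (norm_nonneg _)]
      have h4 : ‖Φ a x‖ ^ 2 ≤ (Real.sqrt ‖Φ (star a * a)‖ * ‖x‖) ^ 2 := by
        rw [h3]; exact h2
      exact (pow_le_pow_iff_left₀ (norm_nonneg _)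
        (mul_nonneg (Real.sqrt_nonneg _) (norm_nonneg _)) two_ne_zero).mp h4
    calc ‖Φ a‖ ^ 2 ≤ (Real.sqrt ‖Φ (star a * a)‖) ^ 2 :=
          pow_le_pow_left₀ (norm_nonneg _) h1 2
      _ = ‖Φ (star a * a)‖ := Real.sq_sqrt (norm_nonneg _)
  -- Step 1: obtain i and ε from continuity at 0
  have hball : {T : E →L[ℂ] E | ‖T‖ < 1} ∈ nhds (0 : E →L[ℂ] E) := by
    have := Metric.ball_mem_nhds (0 : E →L[ℂ] E) one_pos
    simpa [Metric.ball, dist_zero_right] using this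
  have hpre : Φ ⁻¹' {T | ‖T‖ < 1} ∈ nhds (0 : A) := by
    have hc : Filter.Tendsto Φ (nhds 0) (nhds (Φ 0)) := hΦ_cont.continuousAt
    rw [hΦ0] at hc
    exact hc hball
  obtain ⟨⟨i, ε⟩, hε, hsub⟩ := hS_top.mem_iff.mp hpre
  simp only at hε
  obtain ⟨hS_nonneg, hS_add, hS_smul, hS_mul, hS_star, hS_cstar⟩ := hS i
  -- scaling claim
  have hscale : ∀ (a : A) (t : ℝ), 0 < t → t * S i a < ε → t * ‖Φ a‖ < 1 := by
    intro a t ht htε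
    have hmem : S i ((t : ℂ) • a) < ε := by
      rw [hS_smul, Complex.norm_real, Real.norm_of_nonneg ht.le]
      exact htε
    have h2 : ‖Φ ((t : ℂ) • a)‖ < 1 := hsub hmem
    rwa [hΦ_smul, norm_smul (t : ℂ) (Φ a), Complex.norm_real, Real.norm_of_nonneg ht.le] at h2
  -- crude bound with constant M = 2/ε
  set M : ℝ := 2 / ε with hMdef
  have hMpos : 0 < M := by positivity
  have hM : ∀ a : A, ‖Φ a‖ ≤ M * S i a := by
    intro a
    rcases eq_or_lt_of_le (hS_nonneg a) with h0 | hpos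
    · have hz : ∀ t : ℝ, 0 < t → t * ‖Φ a‖ < 1 := by
        intro t ht
        exact hscale a t ht (by rw [← h0, mul_zero]; exact hε)
      have hz0 : ‖Φ a‖ ≤ 0 := by
        by_contra hc
        push_neg at hc
        have := hz (1 / ‖Φ a‖) (by positivity)
        rw [one_div_mul_cancel (ne_of_gt hc)] at this
        exact lt_irrefl 1 this
      calc ‖Φ a‖ ≤ 0 := hz0
        _ = M * S i a := by rw [← h0, mul_zero]
    · set t : ℝ := (ε / 2) / S i a with htdef
      have ht : 0 < t := by positivity
      have ht1 : t * ‖Φ a‖ < 1 := by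
        apply hscale a t ht
        rw [htdef, div_mul_cancel₀ _ (ne_of_gt hpos)]
        linarith
      have h5 : ‖Φ a‖ < 1 / t := by
        rw [lt_div_iff₀ ht, mul_comm]
        exact ht1
      have h6 : 1 / t = M * S i a := by
        rw [htdef, one_div_div, hMdef]
        field_simp
      rw [h6] at h5
      exact h5.le
  -- Bootstrap using iterated squaring
  have hbound_sa : ∀ b : A, star b = b → ‖Φ b‖ ≤ S i b := by
    intro b hsb
    let f : A → A := fun x => x * x
    let c : ℕ → A := fun n => f^[n] b
    have hcs : ∀ n, c (n + 1) = c n * c n := fun n => Function.iterate_succ_apply' f n b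
    have hP : ∀ n : ℕ, star (c n) = c n ∧ S i (c n) = (S i b) ^ (2 ^ n) ∧
        ‖Φ b‖ ^ (2 ^ n) ≤ ‖Φ (c n)‖ := by
      intro n
      induction n with
      | zero => simpa [c, f] using hsb
      | succ n ih =>
        obtain ⟨ihs, ihS, ihΦ⟩ := ih
        refine ⟨?_, ?_, ?_⟩
        · rw [hcs, star_mul, ihs]
        · rw [hcs]
          have h7 := hS_cstar (c n)
          rw [ihs] at h7
          rw [h7, ihS, ← pow_mul, ← pow_succ]
        · have hk := key (c n)
          rw [ihs, ← hcs] at hk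
          calc ‖Φ b‖ ^ 2 ^ (n + 1) = (‖Φ b‖ ^ 2 ^ n) ^ 2 := by
                rw [pow_succ, pow_mul]
            _ ≤ ‖Φ (c n)‖ ^ 2 := pow_le_pow_left₀ (by positivity) ihΦ 2
            _ ≤ ‖Φ (c (n + 1))‖ := hk
    rcases eq_or_lt_of_le (hS_nonneg b) with h0 | hpos
    · have h1 := hM b
      rw [← h0, mul_zero] at h1
      calc ‖Φ b‖ ≤ 0 := h1
        _ = S i b := h0
    · by_contra hlt
      push_neg at hlt
      set r : ℝ := ‖Φ b‖ / S i b with hr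
      have hr1 : 1 < r := (one_lt_div hpos).mpr hlt
      obtain ⟨n, hn⟩ := pow_unbounded_of_one_lt M hr1
      have hrn : r ^ n ≤ r ^ (2 ^ n) :=
        pow_le_pow_right₀ hr1.le (Nat.lt_two_pow_self (n := n)).le
      have hb2 : r ^ (2 ^ n) ≤ M := by
        obtain ⟨_, hSn, hΦn⟩ := hP n
        have h1 : ‖Φ b‖ ^ (2 ^ n) ≤ M * (S i b) ^ (2 ^ n) := by
          calc ‖Φ b‖ ^ (2 ^ n) ≤ ‖Φ (c n)‖ := hΦn
            _ ≤ M * S i (c n) := hM _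
            _ = M * (S i b) ^ (2 ^ n) := by rw [hSn]
        rw [hr, div_pow, div_le_iff₀ (by positivity)]
        linarith
      linarith [lt_of_lt_of_le hn hrn]
  have hbound : ∀ a : A, ‖Φ a‖ ≤ S i a := by
    intro a
    have hsa : star (star a * a) = star a * a := by
      rw [star_mul, star_star]
    have h1 : ‖Φ a‖ ^ 2 ≤ (S i a) ^ 2 := by
      calc ‖Φ a‖ ^ 2 ≤ ‖Φ (star a * a)‖ := key a
        _ ≤ S i (star a * a) := hbound_sa _ hsa
        _ = (S i a) ^ 2 := hS_cstar a
    exact (pow_le_pow_iff_left₀ (norm_nonneg _) (hS_nonneg a) two_ne_zero).mp h1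
  refine ⟨i, hbound, ?_⟩
  intro Ap _ π hπadd hπsmul hπmul hπstar hπsurj hπnorm
  have hπ0 : π 0 = 0 := by
    have h := hπadd 0 0
    rw [add_zero] at h
    exact (left_eq_add.mp h)
  have hπneg : ∀ a : A, π (-a) = -π a := by
    intro a
    have h := hπadd a (-a)
    rw [add_neg_cancel, hπ0] at h
    exact eq_neg_of_add_eq_zero_right h.symm
  have hπsub : ∀ a b : A, π (a - b) = π a - π b := by
    intro a b
    rw [sub_eq_add_neg, hπadd, hπneg, sub_eq_add_neg]
  -- Φ is constant on fibers of π
  have hcongr : ∀ a b : A, π a = π b → Φ a = Φ b := by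
    intro a b h
    have h1 : S i (a - b) = 0 := by
      rw [← hπnorm, hπsub, h, sub_self, norm_zero]
    have h2 : ‖Φ (a - b)‖ ≤ 0 := by
      have := hbound (a - b)
      rw [h1] at this
      exact this
    have h3 : Φ (a - b) = 0 := norm_le_zero_iff.mp h2
    rw [hΦsub, sub_eq_zero] at h3
    exact h3
  -- define Φp via a section of π
  set g : Ap → A := Function.surjInv hπsurj with hgdef
  have hg : ∀ x : Ap, π (g x) = x := fun x => Function.surjInv_eq hπsurj x
  refine ⟨fun x => Φ (g x), ?_, ?_, ?_, ?_, ?_⟩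
  · intro x y
    show Φ (g (x + y)) = Φ (g x) + Φ (g y)
    have h1 : Φ (g (x + y)) = Φ (g x + g y) := by
      apply hcongr
      rw [hg, hπadd, hg, hg]
    rw [h1, hΦ_add]
  · intro cc x
    show Φ (g (cc • x)) = cc • Φ (g x)
    have h1 : Φ (g (cc • x)) = Φ (cc • g x) := by
      apply hcongr
      rw [hg, hπsmul, hg]
    rw [h1, hΦ_smul]
  · intro x y
    show Φ (g (x * y)) = (Φ (g x)).comp (Φ (g y))
    have h1 : Φ (g (x * y)) = Φ (g x * g y) := by
      apply hcongr
      rw [hg, hπmul, hg, hg]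
    rw [h1, hΦ_mul]
  · intro x ξ η
    show inner (𝕜 := B) (Φ (g x) ξ) η = inner (𝕜 := B) ξ (Φ (g (star x)) η)
    have h1 : Φ (g (star x)) = Φ (star (g x)) := by
      apply hcongr
      rw [hg, hπstar, hg]
    rw [h1]
    exact hΦ_star (g x) ξ η
  · intro a
    show Φ a = Φ (g (π a))
    exact hcongr a (g (π a)) (by rw [hg])
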